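/- arXiv:1210.7514 — 4 statements merged into one kernel-verified Lean document; each statement's English description precedes it below -/
import Mathlib

section
/- A finitary endofunctor on Set defined by the formula R(X) = Σ_{n∈ω} Inj((n],X) ⊗_{S_n} R_n, for a functor R : S → Set (where S is the category of finite cardinals and surjections and the quotient is by the diagonal S_n-action), preserves pullbacks along monomorphisms. -/
/-!
STATEMENT 0: A finitary endofunctor on Set defined by the formula
`R(X) = Σ_{n∈ω} Inj((n],X) ⊗_{S_n} R_n`, for a functor `R : S → Set`
(`S` = finite cardinals and surjections), preserves pullbacks along monomorphisms.
-/

open CategoryTheory Limits Function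

/-- A functor `S → Set` on the category of finite cardinals and surjections
(the coefficient data of a semi-analytic functor). -/
structure SurjFunctor : Type 1 where
  obj : ℕ → Type
  map : ∀ {m n : ℕ} (s : Fin m → Fin n), Surjective s → obj m → obj n
  map_id : ∀ {n : ℕ} (r : obj n), map id surjective_id r = r
  map_comp : ∀ {m n k : ℕ} (s : Fin m → Fin n) (hs : Surjective s)
      (t : Fin n → Fin k) (ht : Surjective t) (r : obj m),
      map t ht (map s hs r) = map (t ∘ s) (ht.comp hs) r

/-- The relation `(x⃗ ∘ σ, r) ∼ (x⃗, R(σ)(r))` identifying pairs along the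
diagonal action of the symmetric group `S_n`. -/
def SARel (R : SurjFunctor) (X : Type) (n : ℕ) :
    ((Fin n ↪ X) × R.obj n) → ((Fin n ↪ X) × R.obj n) → Prop :=
  fun p q => ∃ σ : Equiv.Perm (Fin n),
    p.1 = σ.toEmbedding.trans q.1 ∧ q.2 = R.map σ σ.surjective p.2

/-- The value `Σ_{n∈ω} Inj((n],X) ⊗_{S_n} R_n` of the semi-analytic functor at `X`. -/
def SAObj (R : SurjFunctor) (X : Type) : Type :=
  Σ n : ℕ, Quot (SARel R X n)

/-- An endofunctor on `Set` given by the semi-analytic formula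
`F(X) ≅ Σ_n Inj((n],X) ⊗_n R_n` (the bijections `e` are natural:
`F.map` acts on equivalence classes via surjection-injection factorization
of the composite, as encoded by the hypothesis `hmap`) preserves pullbacks
along monomorphisms. -/
theorem semiAnalytic_preserves_pullbacks_along_monos
    (R : SurjFunctor) (F : Type ⥤ Type)
    (e : ∀ X : Type, F.obj X ≃ SAObj R X)
    (hmap : ∀ (X Y : Type) (f : X → Y) (n : ℕ) (x : Fin n ↪ X) (r : R.obj n)
      (k : ℕ) (z : Fin k ↪ Y) (s : Fin n → Fin k) (hs : Surjective s),
      (∀ i : Fin n, z (s i) = f (x i)) →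
      F.map (TypeCat.ofHom f) ((e X).symm ⟨n, Quot.mk _ (x, r)⟩) =
        (e Y).symm ⟨k, Quot.mk _ (z, R.map s hs r)⟩) :
    ∀ {X Y Z : Type} (f : X ⟶ Z) (g : Y ⟶ Z), Mono g →
      PreservesLimit (cospan f g) F := by
  intro X Y Z f g hg
  have hgi : Injective g := (mono_iff_injective g).mp hg
  -- SARel is an equivalence relation
  have sarel_equiv : ∀ (A : Type) (n : ℕ), Equivalence (SARel R A n) := by
    intro A n
    constructor
    · intro p
      refine ⟨Equiv.refl _, ?_, ?_⟩
      · ext i; simp [Equiv.toEmbedding]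
      · exact (R.map_id p.2).symm
    · rintro p q ⟨σ, h1, h2⟩
      refine ⟨σ.symm, ?_, ?_⟩
      · ext j
        simp only [Function.Embedding.trans_apply, Equiv.toEmbedding_apply]
        rw [h1]
        simp [Equiv.toEmbedding]
      · rw [h2, R.map_comp]
        have : (⇑σ.symm ∘ ⇑σ) = id := by ext i; simp
        rw [show R.map (⇑σ.symm ∘ ⇑σ) ((σ.symm.surjective).comp σ.surjective) p.2
            = R.map id surjective_id p.2 by congr 1]
        exact (R.map_id p.2).symm
    · rintro p q s ⟨σ, h1, h2⟩ ⟨τ, h3, h4⟩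
      refine ⟨σ.trans τ, ?_, ?_⟩
      · ext i
        simp only [Function.Embedding.trans_apply, Equiv.toEmbedding_apply,
          Equiv.trans_apply]
        rw [h1, h3]
        simp [Equiv.toEmbedding]
      · rw [h4, h2, R.map_comp]
        congr 1
  have quot_eq : ∀ {A : Type} {n : ℕ} (p q : (Fin n ↪ A) × R.obj n),
      Quot.mk (SARel R A n) p = Quot.mk _ q ↔ SARel R A n p q := by
    intro A n p q
    rw [Quot.eq]
    exact (sarel_equiv A n).eqvGen_iff
  -- representation of elements of F.obj A
  have repr : ∀ {A : Type} (a : F.obj A), ∃ (n : ℕ) (x : Fin n ↪ A) (r : R.obj n),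
      a = (e A).symm ⟨n, Quot.mk _ (x, r)⟩ := by
    intro A a
    obtain ⟨⟨n, q⟩, ha⟩ : ∃ s, e A a = s := ⟨_, rfl⟩
    obtain ⟨⟨x, r⟩, rfl⟩ := q.exists_rep
    exact ⟨n, x, r, by rw [← ha, Equiv.symm_apply_apply]⟩
  -- mapping along a map whose composite with the embedding is injective
  have hmap_inj : ∀ {A B : Type} (h : A → B) {n : ℕ} (x : Fin n ↪ A) (r : R.obj n)
      (hinj : Injective (h ∘ x)),
      F.map (TypeCat.ofHom h) ((e A).symm ⟨n, Quot.mk _ (x, r)⟩)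
        = (e B).symm ⟨n, Quot.mk _ (⟨h ∘ x, hinj⟩, r)⟩ := by
    intro A B h n x r hinj
    have := hmap A B h n x r n ⟨h ∘ x, hinj⟩ id surjective_id (fun i => rfl)
    rwa [R.map_id] at this
  -- F preserves injectivity
  have Finj : ∀ {A B : Type} (h : A → B), Injective h → Injective (F.map (TypeCat.ofHom h)) := by
    intro A B h hinj a a' hEq
    obtain ⟨n, x, r, rfl⟩ := repr a
    obtain ⟨n', x', r', rfl⟩ := repr a'
    have hx : Injective (h ∘ x) := hinj.comp x.injective
    have hx' : Injective (h ∘ x') := hinj.comp x'.injective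
    rw [hmap_inj h x r hx, hmap_inj h x' r' hx'] at hEq
    have hs := (e B).symm.injective hEq
    obtain ⟨hn, hq⟩ := Sigma.mk.inj_iff.mp hs
    subst hn
    obtain ⟨σ, h1, h2⟩ := (quot_eq _ _).mp (eq_of_heq hq)
    refine congrArg _ (congrArg (Sigma.mk n) ?_)
    apply (quot_eq _ _).mpr
    refine ⟨σ, ?_, h2⟩
    ext i
    apply hinj
    have := congrFun (congrArg (fun (u : Fin n ↪ B) => (u : Fin n → B)) h1) i
    simpa [Equiv.toEmbedding] using this
  -- surjection-injection factorization
  have factor : ∀ {A : Type} {n : ℕ} (φ : Fin n → A),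
      ∃ (k : ℕ) (z : Fin k ↪ A) (s : Fin n → Fin k),
        Surjective s ∧ ∀ i, z (s i) = φ i := by
    intro A n φ
    classical
    haveI : Fintype (Set.range φ) := Set.fintypeRange φ
    set k := Fintype.card (Set.range φ) with hk
    let ee : Set.range φ ≃ Fin k := Fintype.equivFin _
    refine ⟨k, ⟨fun j => (ee.symm j : A), ?_⟩,
      fun i => ee ⟨φ i, Set.mem_range_self i⟩, ?_, ?_⟩
    · intro j j' hjj
      exact ee.symm.injective (Subtype.ext hjj)
    · intro j
      obtain ⟨i, hi⟩ := (ee.symm j).2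
      refine ⟨i, ?_⟩
      have h2 : ee ⟨φ i, Set.mem_range_self i⟩ = ee (ee.symm j) :=
        congrArg ee (Subtype.ext hi)
      simpa using h2
    · intro i
      show ((ee.symm (ee ⟨φ i, Set.mem_range_self i⟩) : A)) = φ i
      simp
  -- the main argument
  apply preservesLimit_of_preserves_limit_cone (Types.pullbackLimitCone f g).isLimit
  show IsLimit (F.mapCone (PullbackCone.mk (↾fun p : Types.PullbackObj f g => p.1.1)
    (↾fun p => p.1.2) (by ext p; exact p.2)))
  refine (isLimitMapConePullbackConeEquiv F _).symm
    ((PullbackCone.isLimitEquivBijective _).symm ?_)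
  set P := Types.PullbackObj f g
  set p1 : P → X := fun p => p.1.1 with hp1
  set p2 : P → Y := fun p => p.1.2 with hp2
  have hp1inj : Injective p1 := by
    rintro ⟨⟨x₁, y₁⟩, h₁⟩ ⟨⟨x₂, y₂⟩, h₂⟩ hx
    simp only [hp1] at hx
    subst hx
    have : y₁ = y₂ := hgi (h₁.symm.trans h₂)
    subst this
    rfl
  constructor
  · -- injectivity
    intro c c' hcc
    have h1 : F.map (↾p1) c = F.map (↾p1) c' :=
      congrArg (fun u => u.1.1) hcc
    exact Finj p1 hp1inj h1
  · -- surjectivity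
    rintro ⟨⟨a, b⟩, hab⟩
    obtain ⟨n, x, r, rfl⟩ := repr a
    obtain ⟨m, y, t, rfl⟩ := repr b
    obtain ⟨k, z, s, hs, hzs⟩ := factor (f ∘ x)
    have hFfa : F.map f ((e X).symm ⟨n, Quot.mk _ (x, r)⟩)
        = (e Z).symm ⟨k, Quot.mk _ (z, R.map s hs r)⟩ :=
      hmap X Z f n x r k z s hs hzs
    have hgy : Injective (g ∘ y) := hgi.comp y.injective
    have hFgb : F.map g ((e Y).symm ⟨m, Quot.mk _ (y, t)⟩)
        = (e Z).symm ⟨m, Quot.mk _ (⟨g ∘ y, hgy⟩, t)⟩ :=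
      hmap_inj g y t hgy
    have hab' : F.map f ((e X).symm ⟨n, Quot.mk _ (x, r)⟩)
        = F.map g ((e Y).symm ⟨m, Quot.mk _ (y, t)⟩) := hab
    rw [hFfa, hFgb] at hab'
    have hsig := (e Z).symm.injective hab'
    obtain ⟨hkm, hq⟩ := Sigma.mk.inj_iff.mp hsig
    subst hkm
    obtain ⟨σ, h1, h2⟩ := (quot_eq _ _).mp (eq_of_heq hq)
    -- h1 : z = σ.toEmbedding.trans ⟨g ∘ y, hgy⟩ ; h2 : t = R.map σ _ (R.map s hs r)
    have hz : ∀ j, z j = g (y (σ j)) := by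
      intro j
      have := congrFun (congrArg (fun (u : Fin k ↪ Z) => (u : Fin k → Z)) h1) j
      simpa [Equiv.toEmbedding] using this
    -- build the element of F.obj P
    have hw : ∀ i : Fin n, f (x i) = g (y (σ (s i))) := by
      intro i
      rw [← hz (s i), hzs i]
      rfl
    let w : Fin n ↪ P :=
      ⟨fun i => ⟨(x i, y (σ (s i))), hw i⟩, by
        intro i j hij
        exact x.injective (congrArg (fun (p : P) => p.1.1) hij)⟩
    refine ⟨(e P).symm ⟨n, Quot.mk _ (w, r)⟩, ?_⟩
    have hfst : F.map (↾p1) ((e P).symm ⟨n, Quot.mk _ (w, r)⟩)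
        = (e X).symm ⟨n, Quot.mk _ (x, r)⟩ := by
      have hinj : Injective (p1 ∘ w) := by
        have : p1 ∘ w = x := rfl
        rw [this]; exact x.injective
      rw [hmap_inj p1 w r hinj]
      congr 2
    have hsnd : F.map (↾p2) ((e P).symm ⟨n, Quot.mk _ (w, r)⟩)
        = (e Y).symm ⟨k, Quot.mk _ (y, t)⟩ := by
      have := hmap P Y p2 n w r k y (⇑σ ∘ s) (σ.surjective.comp hs)
        (fun i => rfl)
      rw [this, ← R.map_comp s hs σ σ.surjective r, ← h2]
    apply Subtype.ext
    exact Prod.ext hfst hsnd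
end

section
/- A finitary endofunctor on Set of the form R(X) = Σ_{n∈ω} Inj((n],X) ⊗_{S_n} R_n preserves wide pullbacks of monomorphisms. -/
/-!
STATEMENT 0: A finitary endofunctor on Set defined by the formula
`R(X) = Σ_{n∈ω} Inj((n],X) ⊗_{S_n} R_n`, for a functor `R : S → Set`
(`S` = finite cardinals and surjections), preserves pullbacks along monomorphisms.
-/

open CategoryTheory Limits Function

-- auxiliary lemmas
lemma SurjFunctor.map_congr (R : SurjFunctor) {m n : ℕ} {s t : Fin m → Fin n}
    (hs : Surjective s) (ht : Surjective t) (h : s = t) (r : R.obj m) :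
    R.map s hs r = R.map t ht r := by subst h; rfl

lemma sarel_equivalence (R : SurjFunctor) (X : Type) (n : ℕ) : Equivalence (SARel R X n) := by
  constructor
  · intro p
    refine ⟨Equiv.refl _, ?_, ?_⟩
    · ext i; rfl
    · exact ((R.map_congr _ surjective_id Equiv.coe_refl p.2).trans (R.map_id p.2)).symm
  · rintro p q ⟨σ, h1, h2⟩
    refine ⟨σ.symm, ?_, ?_⟩
    · ext i
      simp only [Function.Embedding.trans_apply, Equiv.coe_toEmbedding]
      rw [h1]; simp
    · rw [h2, R.map_comp]
      exact ((R.map_congr _ surjective_id (Equiv.symm_comp_self σ) p.2).trans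
        (R.map_id p.2)).symm
  · rintro p q t ⟨σ, h1, h2⟩ ⟨τ, h3, h4⟩
    refine ⟨σ.trans τ, ?_, ?_⟩
    · ext i
      simp only [Function.Embedding.trans_apply, Equiv.coe_toEmbedding]
      rw [h1, h3]; rfl
    · rw [h4, h2, R.map_comp]
      exact R.map_congr _ _ (Equiv.coe_trans σ τ).symm p.2

lemma sarel_quot_eq (R : SurjFunctor) {X : Type} {n : ℕ}
    {p q : (Fin n ↪ X) × R.obj n} :
    Quot.mk (SARel R X n) p = Quot.mk (SARel R X n) q ↔ SARel R X n p q :=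
  Quot.eq.trans (sarel_equivalence R X n).eqvGen_iff

section Helpers

variable (R : SurjFunctor) (F : Type ⥤ Type) (e : ∀ X : Type, F.obj X ≃ SAObj R X)

lemma sa_repr (X : Type) (a : F.obj X) :
    ∃ (n : ℕ) (x : Fin n ↪ X) (r : R.obj n),
      a = (e X).symm ⟨n, Quot.mk _ (x, r)⟩ := by
  obtain ⟨⟨n, q⟩, rfl⟩ := (e X).symm.surjective a
  induction q using Quot.ind with
  | _ p => exact ⟨n, p.1, p.2, rfl⟩

variable (hmap : ∀ (X Y : Type) (f : X → Y) (n : ℕ) (x : Fin n ↪ X) (r : R.obj n)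
      (k : ℕ) (z : Fin k ↪ Y) (s : Fin n → Fin k) (hs : Surjective s),
      (∀ i : Fin n, z (s i) = f (x i)) →
      F.map (TypeCat.ofHom f) ((e X).symm ⟨n, Quot.mk _ (x, r)⟩) =
        (e Y).symm ⟨k, Quot.mk _ (z, R.map s hs r)⟩)

include hmap in
lemma sa_map_of_injective {X Y : Type} (f : X → Y) (hf : Injective f)
    (n : ℕ) (x : Fin n ↪ X) (r : R.obj n) :
    F.map (TypeCat.ofHom f) ((e X).symm ⟨n, Quot.mk _ (x, r)⟩) =
      (e Y).symm ⟨n, Quot.mk _ (⟨f ∘ x, hf.comp x.injective⟩, r)⟩ := by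
  have h := hmap X Y f n x r n ⟨f ∘ x, hf.comp x.injective⟩ id surjective_id
    (fun i => rfl)
  rw [h, R.map_id]

include hmap in
lemma sa_map_injective {X Y : Type} (f : X → Y) (hf : Injective f) :
    Function.Injective (F.map (TypeCat.ofHom f)) := by
  intro a b hab
  obtain ⟨n, x, r, rfl⟩ := sa_repr R F e X a
  obtain ⟨m, y, s, rfl⟩ := sa_repr R F e X b
  rw [sa_map_of_injective R F e hmap f hf, sa_map_of_injective R F e hmap f hf] at hab
  have h := (e Y).symm.injective hab
  injection h with h1 h2
  subst h1
  have h3 := (sarel_quot_eq R).mp (eq_of_heq h2)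
  obtain ⟨σ, hσ1, hσ2⟩ := h3
  apply congrArg
  apply congrArg
  apply Quot.sound
  refine ⟨σ, ?_, hσ2⟩
  ext i
  apply hf
  exact congrFun (congrArg (fun (g : Fin n ↪ Y) => (g : Fin n → Y)) hσ1) i

end Helpers

/-- An endofunctor on `Set` of the form `F(X) ≅ Σ_n Inj((n],X) ⊗_n R_n`
preserves wide pullbacks of monomorphisms (limits of families of
monomorphisms with common codomain). -/
theorem semiAnalytic_preserves_wide_pullbacks_of_monos
    (R : SurjFunctor) (F : Type ⥤ Type)
    (e : ∀ X : Type, F.obj X ≃ SAObj R X)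
    (hmap : ∀ (X Y : Type) (f : X → Y) (n : ℕ) (x : Fin n ↪ X) (r : R.obj n)
      (k : ℕ) (z : Fin k ↪ Y) (s : Fin n → Fin k) (hs : Surjective s),
      (∀ i : Fin n, z (s i) = f (x i)) →
      F.map (TypeCat.ofHom f) ((e X).symm ⟨n, Quot.mk _ (x, r)⟩) =
        (e Y).symm ⟨k, Quot.mk _ (z, R.map s hs r)⟩) :
    ∀ (J : Type) (D : WidePullbackShape J ⥤ Type),
      (∀ j : J, Mono (D.map (WidePullbackShape.Hom.term j))) →
      PreservesLimit D F := by
  intro J D hmono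
  -- injectivity of the monos, as functions
  have hterm : ∀ j : J, Injective (D.map (WidePullbackShape.Hom.term j)) :=
    fun j => (mono_iff_injective _).1 (hmono j)
  -- two sections agreeing at `none` are equal
  have hproj : ∀ s t : D.sections, s.1 none = t.1 none → s = t := by
    intro s t h
    apply Subtype.ext
    funext o
    cases o with
    | none => exact h
    | some j =>
      apply hterm j
      rw [s.2 (WidePullbackShape.Hom.term j), t.2 (WidePullbackShape.Hom.term j), h]
  -- the canonical limit cone on sections
  let c : Cone D :=
    { pt := D.sections
      π := { app := fun i => TypeCat.ofHom (fun s : D.sections => s.1 i)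
             naturality := fun i i' f => ConcreteCategory.hom_ext _ _ fun s => (s.2 f).symm } }
  have hc : IsLimit c := by
    refine ((Types.isLimit_iff c).2 ?_).some
    intro s hs
    exact ⟨⟨s, hs⟩, fun j => rfl, fun y hy => Subtype.ext (funext fun j => hy j)⟩
  refine preservesLimit_of_preserves_limit_cone hc ?_
  refine ((Types.isLimit_iff (F.mapCone c)).2 ?_).some
  intro u hu
  -- projections out of sections are injective
  have pnone : Injective (fun s : c.pt => s.1 none) := fun s t h => hproj s t h
  have psome : ∀ j : J, Injective (fun s : c.pt => s.1 (some j)) := by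
    intro j s t h
    apply hproj
    rw [← s.2 (WidePullbackShape.Hom.term j), ← t.2 (WidePullbackShape.Hom.term j)]
    exact congrArg (D.map (WidePullbackShape.Hom.term j)) h
  -- represent u none
  obtain ⟨n, z, r, hz⟩ := sa_repr R F e (D.obj none) (u none)
  -- key: compatible representatives over each j
  have key : ∀ j : J, ∃ w : Fin n ↪ D.obj (some j),
      (∀ i, D.map (WidePullbackShape.Hom.term j) (w i) = z i) ∧
      u (some j) = (e (D.obj (some j))).symm ⟨n, Quot.mk _ (w, r)⟩ := by
    intro j
    obtain ⟨m, y, t, hy⟩ := sa_repr R F e (D.obj (some j)) (u (some j))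
    have huj := hu (WidePullbackShape.Hom.term j)
    simp only [Functor.comp_map] at huj
    change F.map (TypeCat.ofHom (D.map (WidePullbackShape.Hom.term j))) (u (some j)) = u none at huj
    rw [hy, sa_map_of_injective R F e hmap _ (hterm j), hz] at huj
    have h := (e (D.obj none)).symm.injective huj
    injection h with h1 h2
    subst h1
    obtain ⟨σ, hσ1, hσ2⟩ := (sarel_quot_eq R).mp (eq_of_heq h2)
    have hσ1' : ∀ i, D.map (WidePullbackShape.Hom.term j) (y i) = z (σ i) :=
      fun i => DFunLike.congr_fun hσ1 i
    refine ⟨⟨fun i => y (σ.symm i), y.injective.comp σ.symm.injective⟩, ?_, ?_⟩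
    · intro i
      simp only [Function.Embedding.coeFn_mk]
      rw [hσ1' (σ.symm i), Equiv.apply_symm_apply]
    · rw [hy]
      apply congrArg
      apply congrArg
      apply Quot.sound
      refine ⟨σ, ?_, hσ2⟩
      ext i
      simp only [Function.Embedding.trans_apply, Equiv.coe_toEmbedding,
        Function.Embedding.coeFn_mk, Equiv.symm_apply_apply]
  choose w hw1 hw2 using key
  -- build the section-valued embedding
  have hcompat : ∀ i : Fin n, (fun o => Option.rec (z i) (fun j => w j i) o) ∈ D.sections := by
    intro i o o' f
    rcases f with _ | j
    · exact ConcreteCategory.congr_hom (D.map_id _) _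
    · exact hw1 j i
  let sec : Fin n → c.pt := fun i => ⟨fun o => Option.rec (z i) (fun j => w j i) o, hcompat i⟩
  have hsecinj : Injective sec := by
    intro i i' h
    exact z.injective (congrArg (fun s : c.pt => s.1 none) h)
  refine ⟨(e c.pt).symm ⟨n, Quot.mk _ (⟨sec, hsecinj⟩, r)⟩, ?_, ?_⟩
  · intro i₀
    cases i₀ with
    | none =>
      show F.map (TypeCat.ofHom (fun s : c.pt => s.1 none)) _ = u none
      rw [sa_map_of_injective R F e hmap _ pnone, hz]
      apply congrArg; apply congrArg; apply congrArg
      apply Prod.ext _ rfl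
      ext i; rfl
    | some j =>
      show F.map (TypeCat.ofHom (fun s : c.pt => s.1 (some j))) _ = u (some j)
      rw [sa_map_of_injective R F e hmap _ (psome j), hw2 j]
      apply congrArg; apply congrArg; apply congrArg
      apply Prod.ext _ rfl
      ext i; rfl
  · intro x hx
    apply sa_map_injective R F e hmap (fun s : c.pt => s.1 none) pnone
    have h1 : F.map (TypeCat.ofHom (fun s : c.pt => s.1 none)) x = u none := hx none
    refine h1.trans ?_
    rw [sa_map_of_injective R F e hmap _ pnone, hz]
    apply congrArg; apply congrArg; apply congrArg
    apply Prod.ext _ rfl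
    ext i; rfl
end

section
/- An endofunctor on Set of the form A(X) = Σ_{n∈ω} X^n ⊗_{S_n} A_n, for a functor A : B → Set (B the category of finite cardinals and bijections), weakly preserves wide pullbacks. -/
/-!
STATEMENT 2: An endofunctor on Set of the form `A(X) = Σ_{n∈ω} X^n ⊗_{S_n} A_n`,
for a functor `A : B → Set` (`B` = finite cardinals and bijections),
weakly preserves wide pullbacks.
-/

open CategoryTheory Function

/-- A functor `B → Set` on the category of finite cardinals and bijections
(the coefficient data of an analytic functor). -/
structure BijFunctor : Type 1 where
  obj : ℕ → Type
  map : ∀ {n : ℕ}, Equiv.Perm (Fin n) → obj n → obj n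
  map_id : ∀ {n : ℕ} (a : obj n), map (Equiv.refl (Fin n)) a = a
  map_comp : ∀ {n : ℕ} (σ τ : Equiv.Perm (Fin n)) (a : obj n),
      map τ (map σ a) = map (σ.trans τ) a

/-- The relation `(x⃗ ∘ σ, a) ∼ (x⃗, A(σ)(a))` identifying pairs along the
diagonal `S_n`-action. -/
def ANRel (A : BijFunctor) (X : Type) (n : ℕ) :
    ((Fin n → X) × A.obj n) → ((Fin n → X) × A.obj n) → Prop :=
  fun p q => ∃ σ : Equiv.Perm (Fin n),
    p.1 = q.1 ∘ σ ∧ q.2 = A.map σ p.2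

/-- The value `Σ_{n∈ω} X^n ⊗_{S_n} A_n` of the analytic functor at `X`. -/
def ANObj (A : BijFunctor) (X : Type) : Type :=
  Σ n : ℕ, Quot (ANRel A X n)

/-- The concrete wide pullback of a family `m j : X j → Z` in `Set`:
tuples `(z, (x_j)_j)` with `m j (x_j) = z` for all `j`. -/
def WidePB {J : Type} (Z : Type) (X : J → Type) (m : ∀ j, X j → Z) : Type :=
  { p : Z × (∀ j, X j) // ∀ j, m j (p.2 j) = p.1 }

lemma anrel_equiv (A : BijFunctor) (X : Type) (n : ℕ) :
    Equivalence (ANRel A X n) := by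
  constructor
  · intro p
    exact ⟨Equiv.refl _, rfl, (A.map_id _).symm⟩
  · rintro p q ⟨σ, h1, h2⟩
    refine ⟨σ.symm, ?_, ?_⟩
    · funext i; simp [h1]
    · rw [h2, A.map_comp, Equiv.self_trans_symm, A.map_id]
  · rintro p q r ⟨σ, h1, h2⟩ ⟨τ, h3, h4⟩
    refine ⟨σ.trans τ, ?_, ?_⟩
    · funext i; simp [h1, h3]
    · rw [h4, h2, A.map_comp]

/-- An endofunctor on `Set` of the form `F(X) ≅ Σ_n X^n ⊗_n A_n` weakly
preserves wide pullbacks: any compatible family of elements over the images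
of the legs of a wide pullback is (not necessarily uniquely) covered by an
element of the value at the wide pullback, i.e. the canonical comparison
map into the limit is surjective. -/
theorem analytic_weakly_preserves_wide_pullbacks
    (A : BijFunctor) (F : Type ⥤ Type)
    (e : ∀ X : Type, F.obj X ≃ ANObj A X)
    (hmap : ∀ (X Y : Type) (f : X → Y) (n : ℕ) (x : Fin n → X) (a : A.obj n),
      F.map (TypeCat.ofHom f) ((e X).symm ⟨n, Quot.mk _ (x, a)⟩) =
        (e Y).symm ⟨n, Quot.mk _ (f ∘ x, a)⟩) :
    ∀ (J : Type) (Z : Type) (X : J → Type) (m : ∀ j, X j → Z)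
      (b : F.obj Z) (y : ∀ j, F.obj (X j)),
      (∀ j, F.map (TypeCat.ofHom (m j)) (y j) = b) →
      ∃ w : F.obj (WidePB Z X m),
        F.map (TypeCat.ofHom fun p => p.1.1) w = b ∧
        ∀ j, F.map (TypeCat.ofHom fun p => p.1.2 j) w = y j := by
  intro J Z X m b y hy
  rcases hb' : e Z b with ⟨n, qb⟩
  obtain ⟨⟨z, a⟩, rfl⟩ := Quot.exists_rep qb
  have hb : b = (e Z).symm ⟨n, Quot.mk _ (z, a)⟩ := by
    rw [← hb']; simp
  have key : ∀ j, ∃ x' : Fin n → X j,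
      (∀ i, m j (x' i) = z i) ∧
      y j = (e (X j)).symm ⟨n, Quot.mk _ (x', a)⟩ := by
    intro j
    rcases hj : e (X j) (y j) with ⟨nj, qj⟩
    obtain ⟨⟨x, aj⟩, rfl⟩ := Quot.exists_rep qj
    have hyj : y j = (e (X j)).symm ⟨nj, Quot.mk _ (x, aj)⟩ := by
      rw [← hj]; simp
    have hcomp := hy j
    rw [hyj, hmap, hb] at hcomp
    have hsig : (⟨nj, Quot.mk _ (m j ∘ x, aj)⟩ : ANObj A Z)
        = ⟨n, Quot.mk _ (z, a)⟩ := (e Z).symm.injective hcomp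
    have hn : nj = n := congrArg Sigma.fst hsig
    subst hn
    have hq2 : Quot.mk _ (m j ∘ x, aj) = Quot.mk (ANRel A Z nj) (z, a) :=
      by simpa using hsig
    have hrel : ANRel A Z nj (m j ∘ x, aj) (z, a) :=
      ((anrel_equiv A Z nj).eqvGen_iff).mp (Quot.eq.mp hq2)
    obtain ⟨σ, h1, h2⟩ := hrel
    refine ⟨x ∘ σ.symm, ?_, ?_⟩
    · intro i
      have := congrFun h1 (σ.symm i)
      simpa using this
    · rw [hyj]
      congr 1
      refine congrArg _ (Quot.sound ⟨σ, ?_, h2⟩)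
      funext i; simp
  choose x' hx' hy' using key
  refine ⟨(e (WidePB Z X m)).symm ⟨n, Quot.mk _
      (fun i => ⟨(z i, fun j => x' j i), fun j => hx' j i⟩, a)⟩, ?_, ?_⟩
  · refine (hmap _ _ _ _ _ _).trans ?_
    rw [hb]
    rfl
  · intro j
    refine (hmap _ _ _ _ _ _).trans ?_
    rw [hy' j]
    rfl
end

section
/- For a κ-accessible endofunctor F on Set (κ a regular cardinal) that preserves wide pullbacks of monomorphisms, for every set X and every x ∈ F(X) there exists a least cardinal α < κ, an injection f : (α] → X, and y ∈ F((α]) with F(f)(y) = x, such that (f, y) is minimal: any other mono through which x factors contains the image of f. -/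
/-!
STATEMENT 3: For a κ-accessible endofunctor `F` on Set (κ regular) preserving
wide pullbacks of monomorphisms, every `x ∈ F(X)` factors through a least
subobject of `X` of cardinality `< κ`.
-/

open CategoryTheory Limits

universe u

/-- A category `J` is `κ`-filtered if every subdiagram with fewer than `κ`
morphisms admits a cocone. -/
def CardinalFiltered (J : Type u) [Category.{u} J] (κ : Cardinal.{u}) : Prop :=
  ∀ (K : Type u) [SmallCategory K],
    Cardinal.mk (Σ k k' : K, k ⟶ k') < κ → ∀ D : K ⥤ J, Nonempty (Cocone D)

/-- If `F` is a `κ`-accessible endofunctor on `Set` (it preserves colimits of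
`κ`-filtered diagrams), `κ` a regular cardinal, and `F` preserves wide
pullbacks of monomorphisms, then every element `x ∈ F(X)` factors through a
least subobject `S ↪ X`, which has cardinality (the least such cardinal)
`α < κ`: there are `y ∈ F(S)` with `F(incl)(y) = x`, and any other
monomorphism through which `x` factors contains `S`. -/
theorem accessible_wide_pullback_preserving_has_least_support
    (κ : Cardinal.{u}) (hκ : κ.IsRegular) (F : Type u ⥤ Type u)
    (hacc : ∀ (J : Type u) [SmallCategory J],
      CardinalFiltered J κ → PreservesColimitsOfShape J F)
    (hwide : ∀ (J : Type u) (D : WidePullbackShape J ⥤ Type u),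
      (∀ j : J, Mono (D.map (WidePullbackShape.Hom.term j))) →
      PreservesLimit D F) :
    ∀ (X : Type u) (x : F.obj X),
      ∃ (S : Set X) (y : F.obj S),
        Cardinal.mk S < κ ∧
        F.map (TypeCat.ofHom (Subtype.val : S → X)) y = x ∧
        (∀ (T : Set X) (z : F.obj T),
          F.map (TypeCat.ofHom (Subtype.val : T → X)) z = x → S ⊆ T) := by
  classical
  intro X x
  -- Part A: the poset of subsets of X of cardinality < κ
  let P := {T : Set X // Cardinal.mk ↥T < κ}
  haveI : IsDirected P (· ≤ ·) :=
    ⟨fun a b => ⟨⟨a.1 ∪ b.1,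
      lt_of_le_of_lt (Cardinal.mk_union_le _ _)
        (Cardinal.add_lt_of_lt hκ.aleph0_le a.2 b.2)⟩,
      Set.subset_union_left, Set.subset_union_right⟩⟩
  haveI : Nonempty P := ⟨⟨∅, by
    simpa using lt_of_lt_of_le Cardinal.aleph0_pos hκ.aleph0_le⟩⟩
  let G : P ⥤ Type u :=
    { obj := fun T => ↥T.1
      map := fun {a b} f => TypeCat.ofHom (Set.inclusion (leOfHom f))
      map_id := fun a => rfl
      map_comp := fun f g => rfl }
  let t : Cocone G :=
    { pt := X
      ι := { app := fun T => TypeCat.ofHom Subtype.val, naturality := fun a b f => rfl } }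
  have hfilt : CardinalFiltered P κ := by
    intro K _ hK D
    have hKcard : Cardinal.mk K < κ := by
      refine lt_of_le_of_lt (Cardinal.mk_le_of_injective
        (f := fun k => (⟨k, k, 𝟙 k⟩ : Σ k k' : K, k ⟶ k')) ?_) hK
      intro a b h
      simpa using congrArg Sigma.fst h
    have hU : Cardinal.mk ↥(⋃ k : K, (D.obj k).1) < κ :=
      lt_of_le_of_lt Cardinal.mk_iUnion_le_sum_mk
        (Cardinal.sum_lt_of_isRegular hκ hKcard fun k => (D.obj k).2)
    exact ⟨{ pt := ⟨⋃ k : K, (D.obj k).1, hU⟩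
             ι := { app := fun k => homOfLE (Set.subset_iUnion (fun k => (D.obj k).1) k)
                    naturality := fun a b f => Subsingleton.elim _ _ } }⟩
  have ht : IsColimit t := by
    refine Types.FilteredColimit.isColimitOf G t ?_ ?_
    · intro a
      exact ⟨⟨{a}, by
        rw [Cardinal.mk_singleton]
        exact lt_of_lt_of_le Cardinal.one_lt_aleph0 hκ.aleph0_le⟩,
        ⟨a, rfl⟩, rfl⟩
    · intro i j xi xj h
      refine ⟨⟨i.1 ∪ j.1, lt_of_le_of_lt (Cardinal.mk_union_le _ _)
        (Cardinal.add_lt_of_lt hκ.aleph0_le i.2 j.2)⟩,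
        homOfLE Set.subset_union_left, homOfLE Set.subset_union_right, ?_⟩
      exact Subtype.ext h
  haveI := hacc P hfilt
  obtain ⟨T0, z0, hz0⟩ := Types.jointly_surjective (G ⋙ F)
    (isColimitOfPreserves F ht) x
  -- Part B: wide pullback over all subsets through which x factors
  let J : Type u := {T : Set X // ∃ z : F.obj ↥T, F.map (TypeCat.ofHom (Subtype.val : ↥T → X)) z = x}
  let S : Set X := ⋂ j : J, j.1
  have hT0 : (T0.1 : Set X) ∈ {T : Set X | ∃ z : F.obj ↥T, F.map (TypeCat.ofHom (Subtype.val : ↥T → X)) z = x} :=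
    ⟨z0, hz0⟩
  let D : WidePullbackShape J ⥤ Type u :=
    WidePullbackShape.wideCospan X (fun j => ↥j.1) (fun j => TypeCat.ofHom Subtype.val)
  have hDterm : ∀ j : J, D.map (WidePullbackShape.Hom.term j) = TypeCat.ofHom (Subtype.val : ↥j.1 → X) :=
    fun j => rfl
  have hmono : ∀ j : J, Mono (D.map (WidePullbackShape.Hom.term j)) := by
    intro j
    rw [CategoryTheory.mono_iff_injective]
    exact Subtype.val_injective
  let c : Cone D := WidePullbackShape.mkCone (F := D)
    (TypeCat.ofHom (Subtype.val : ↥S → X))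
    (fun j => TypeCat.ofHom fun s => ⟨s.1, Set.mem_iInter.1 s.2 j⟩)
    (fun j => rfl)
  have key : ∀ (d : Cone D) (a : d.pt) (j : J),
      d.π.app none a = (d.π.app (some j) a).1 := by
    intro d a j
    exact (types_congr_hom (d.w (WidePullbackShape.Hom.term j)) a).symm
  have hc : IsLimit c := by
    refine { lift := fun d => TypeCat.ofHom fun a => ⟨d.π.app none a, Set.mem_iInter.2 fun j => ?_⟩
             fac := ?_
             uniq := ?_ }
    · rw [key d a j]; exact (d.π.app (some j) a).2
    · intro d o
      match o with
      | none => rfl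
      | some j =>
        ext a
        exact Subtype.ext (key d a j)
    · intro d m hm
      ext a
      exact Subtype.ext (types_congr_hom (hm none) a)
  haveI := hwide J D hmono
  let d' : Cone (D ⋙ F) := WidePullbackShape.mkCone (F := D ⋙ F)
    (TypeCat.ofHom fun _ : PUnit.{u+1} => x)
    (fun j => TypeCat.ofHom fun _ => Classical.choose j.2)
    (fun j => ConcreteCategory.hom_ext _ _ fun _ => Classical.choose_spec j.2)
  let y : F.obj ↥S := (isLimitOfPreserves F hc).lift d' PUnit.unit
  have hy : F.map (TypeCat.ofHom (Subtype.val : ↥S → X)) y = x :=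
    types_congr_hom ((isLimitOfPreserves F hc).fac d' none) PUnit.unit
  refine ⟨S, y, ?_, hy, ?_⟩
  · exact lt_of_le_of_lt (Cardinal.mk_le_mk_of_subset
      (Set.iInter_subset (fun j : J => j.1) ⟨T0.1, hT0⟩)) T0.2
  · intro T z hz
    exact Set.iInter_subset (fun j : J => j.1) ⟨T, z, hz⟩
end
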